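/- The element C_q := (1/2)(T1 T1' + T1' T1) + (1/2)(q+q^{-1}) T2^2, where T1' := q^{-1/2}I T2 - q^{1/2}T2 I, equals q^{-1}T1^2 + qT2^2 + q^{-3/2}(1-q^2)T1 T2 I in U_q(iso_2). -/
import Mathlib


/-- In U_q(iso₂), with T1' := q^{-1/2}IT2 - q^{1/2}T2I, the element
C_q := (1/2)(T1T1' + T1'T1) + (1/2)(q+q⁻¹)T2² equals
q⁻¹T1² + qT2² + q^{-3/2}(1-q²)T1T2I. -/
theorem stmt4 (q sq : ℂ) (hq : q ≠ 0) (hsq : sq ^ 2 = q)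
    (A : Type*) [Ring A] [Algebra ℂ A] (I T1 T2 : A)
    (h1 : sq • (I * T2) - sq⁻¹ • (T2 * I) = T1)
    (h2 : sq • (T1 * I) - sq⁻¹ • (I * T1) = T2)
    (h3 : sq • (T2 * T1) - sq⁻¹ • (T1 * T2) = 0) :
    let T1' := sq⁻¹ • (I * T2) - sq • (T2 * I)
    (2 : ℂ)⁻¹ • (T1 * T1' + T1' * T1) + ((2 : ℂ)⁻¹ * (q + q⁻¹)) • T2 ^ 2 =
      q⁻¹ • T1 ^ 2 + q • T2 ^ 2 + ((q⁻¹ * sq⁻¹) * (1 - q ^ 2)) • (T1 * T2 * I) := by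
  intro T1'
  subst hsq
  have hs : sq ≠ 0 := by
    intro h; exact hq (by simp [h])
  have e1 : I * T2 = sq⁻¹ • T1 + ((sq^2)⁻¹ : ℂ) • (T2 * I) := by
    rw [← h1]; match_scalars <;> field_simp <;> ring
  have e2 : I * T1 = (sq^2 : ℂ) • (T1 * I) - sq • T2 := by
    rw [← h2]; match_scalars <;> field_simp <;> ring
  have e3 : T2 * T1 = ((sq^2)⁻¹ : ℂ) • (T1 * T2) := by
    have h := sub_eq_zero.mp h3
    calc T2 * T1 = sq⁻¹ • (sq • (T2 * T1)) := by
          rw [smul_smul, inv_mul_cancel₀ hs, one_smul]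
      _ = sq⁻¹ • (sq⁻¹ • (T1 * T2)) := by rw [h]
      _ = _ := by rw [smul_smul, ← mul_inv]; congr 1; ring
  have f1 : T2 * (I * T1) = T1 * (T2 * I) - sq • T2 ^ 2 := by
    rw [e2, mul_sub, mul_smul_comm, mul_smul_comm, ← mul_assoc, e3,
      smul_mul_assoc, smul_smul, mul_inv_cancel₀ (pow_ne_zero 2 hs), one_smul,
      mul_assoc, pow_two]
  have g1 : T1 * T1' = ((sq^2)⁻¹ : ℂ) • T1 ^ 2 + (((sq^3)⁻¹ : ℂ) - sq) • (T1 * T2 * I) := by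
    show T1 * (sq⁻¹ • (I * T2) - sq • (T2 * I)) = _
    rw [e1]
    simp only [mul_sub, mul_add, mul_smul_comm, smul_add, smul_sub, smul_smul, pow_two,
      mul_assoc]
    match_scalars <;> field_simp <;> ring
  have g2 : T1' * T1 = ((sq^2)⁻¹ : ℂ) • T1 ^ 2 + (((sq^3)⁻¹ : ℂ) - sq) • (T1 * T2 * I)
      + ((sq^2 : ℂ) - (sq^2)⁻¹) • T2 ^ 2 := by
    show (sq⁻¹ • (I * T2) - sq • (T2 * I)) * T1 = _
    rw [e1]
    simp only [sub_mul, add_mul, smul_mul_assoc, mul_assoc, f1]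
    simp only [mul_sub, mul_add, mul_smul_comm, smul_add, smul_sub, smul_smul, pow_two,
      mul_assoc]
    match_scalars <;> field_simp <;> ring
  rw [g1, g2]
  simp only [smul_add, smul_sub, smul_smul, mul_assoc]
  match_scalars <;> field_simp <;> ring
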